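/- The functions {Q_n(λ_{σ(1)},...,λ_{σ(n)}) : σ ∈ S_n}, viewed as rational functions in the variables λ_1,...,λ_n over ℚ, are linearly independent, where Q_n(μ_1,...,μ_n) = 1/∏_{j=2}^{n}(μ_j + ... + μ_n). -/

import Mathlib

open MvPolynomial
set_option linter.unusedSectionVars false
set_option linter.unnecessarySimpa false

namespace Stmt10
variable {ι : Type} [DecidableEq ι]

noncomputable def esum (l : List ι) : MvPolynomial ι ℚ := (l.map X).sum

lemma esum_cons (a : ι) (t : List ι) : esum (a :: t) = X a + esum t := by simp [esum]

noncomputable def e : List ι → MvPolynomial ι ℚ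
  | [] => 1
  | (a :: t) => esum (a :: t) * e t

noncomputable def e₀ : List ι → MvPolynomial ι ℚ
  | [] => 1
  | [_] => 1
  | (a :: b :: t) => esum (a :: b :: t) * e₀ (b :: t)

noncomputable def ev (i : ι) : MvPolynomial ι ℚ →ₐ[ℚ] MvPolynomial ι ℚ :=
  aeval (fun k => if k = i then 0 else X k)

lemma ev_X (i k : ι) : ev i (X k) = if k = i then 0 else X k := by simp [ev]

lemma esum_nil : esum ([] : List ι) = 0 := rfl
lemma e_nil : e ([] : List ι) = 1 := rfl
lemma e_cons (a : ι) (t : List ι) : e (a :: t) = esum (a :: t) * e t := rfl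

lemma coeff_esum_eq_zero {a : ι} {t : List ι} (h : a ∉ t) :
    coeff (Finsupp.single a 1) (esum t) = 0 := by
  induction t with
  | nil => simp [esum_nil]
  | cons b t ih =>
    rw [esum_cons, coeff_add, coeff_X', if_neg, ih (fun hm => h (List.mem_cons_of_mem _ hm)),
      add_zero]
    intro hs
    have : b = a := by
      by_contra hba
      have := Finsupp.single_eq_single_iff b a (1:ℕ) 1 |>.mp hs
      simp [hba] at this
    exact h (this ▸ List.mem_cons_self (a := b) (l := t))

lemma esum_ne_zero {l : List ι} (hne : l ≠ []) (hnd : l.Nodup) : esum l ≠ 0 := by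
  match l, hne with
  | (a :: t), _ =>
    intro h0
    have : coeff (Finsupp.single a 1) (esum (a :: t)) = 1 := by
      rw [esum_cons, coeff_add, coeff_X', if_pos rfl,
        coeff_esum_eq_zero (List.nodup_cons.mp hnd).1, add_zero]
    rw [h0, coeff_zero] at this
    exact one_ne_zero this.symm

lemma e_ne_zero {l : List ι} (hnd : l.Nodup) : e l ≠ 0 := by
  induction l with
  | nil => exact one_ne_zero
  | cons a t ih =>
    exact mul_ne_zero (esum_ne_zero (List.cons_ne_nil a t) hnd) (ih (List.nodup_cons.mp hnd).2)

lemma e_eq_e₀_mul {l : List ι} {i : ι} (h : l.getLast? = some i) :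
    e l = e₀ l * X i := by
  induction l with
  | nil => simp at h
  | cons a t ih =>
    match t with
    | [] =>
      simp only [List.getLast?_singleton, Option.some_inj] at h
      subst h
      show esum [a] * 1 = 1 * X a
      simp [esum]
    | (b :: t') =>
      have h' : (b :: t').getLast? = some i := by
        rwa [List.getLast?_cons_cons] at h
      rw [e_cons, ih h', show e₀ (a :: b :: t') = esum (a :: b :: t') * e₀ (b :: t') from rfl,
        mul_assoc]

lemma ev_esum (i : ι) (t : List ι) :
    ev i (esum t) = esum (t.filter (fun x => x ≠ i)) := by
  induction t with
  | nil => simp [esum]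
  | cons a t ih =>
    rw [esum_cons, map_add, ev_X, ih, List.filter_cons]
    by_cases h : a = i
    · simp [h]
    · simp [h, esum_cons]

lemma filter_eq_dropLast {l : List ι} {i : ι} (hnd : l.Nodup) (h : l.getLast? = some i) :
    l.filter (fun x => x ≠ i) = l.dropLast := by
  have hne : l ≠ [] := by rintro rfl; simp at h
  have hl : l.dropLast ++ [l.getLast hne] = l := List.dropLast_append_getLast hne
  have hgl : l.getLast hne = i := by
    rw [List.getLast?_eq_getLast (l := l) hne, Option.some_inj] at h; exact h
  conv_lhs => rw [← hl]
  rw [List.filter_append]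
  have hnotmem : i ∉ l.dropLast := by
    rw [← hl, hgl] at hnd
    have := List.disjoint_of_nodup_append hnd
    intro hi
    exact this hi (List.mem_singleton_self i)
  rw [List.filter_eq_self.mpr, hgl]
  · simp
  · intro a ha
    simp only [ne_eq, decide_eq_true_eq]
    rintro rfl; exact hnotmem ha

lemma ev_e₀ {i : ι} : ∀ {l : List ι}, l.Nodup → l.getLast? = some i →
    ev i (e₀ l) = e l.dropLast
  | [], _, h => by simp at h
  | [a], _, _ => by
      show ev i (1 : MvPolynomial ι ℚ) = e []
      simp [e]
  | (a :: b :: t), hnd, h => by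
      have h' : (b :: t).getLast? = some i := by rwa [List.getLast?_cons_cons] at h
      have hnd' : (b :: t).Nodup := (List.nodup_cons.mp hnd).2
      show ev i (esum (a :: b :: t) * e₀ (b :: t)) = e (a :: b :: t).dropLast
      rw [map_mul, ev_esum, ev_e₀ hnd' h', filter_eq_dropLast hnd h,
        List.dropLast_cons₂]
      show _ = esum (a :: (b :: t).dropLast) * e (b :: t).dropLast
      rfl

lemma ev_e_ne_zero {i : ι} : ∀ {l : List ι}, l.Nodup → l.getLast? ≠ some i →
    ev i (e l) ≠ 0
  | [], _, _ => by simpa [e] using one_ne_zero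
  | (a :: t), hnd, h => by
      show ev i (esum (a :: t) * e t) ≠ 0
      rw [map_mul, ev_esum]
      apply mul_ne_zero
      · apply esum_ne_zero _ (hnd.filter _)
        intro hemp
        rw [List.filter_eq_nil_iff] at hemp
        simp only [ne_eq, decide_eq_true_eq, not_not] at hemp
        have ha : a = i := hemp a (List.mem_cons_self (a := a) (l := t))
        match t with
        | [] => exact h (by simp [ha])
        | (b :: t') =>
          have hb : b = i := hemp b (by simp)
          exact (List.nodup_cons.mp hnd).1 (by rw [ha, ← hb]; exact List.mem_cons_self (a := b) (l := t'))
      · match t with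
        | [] => simpa [e] using one_ne_zero
        | (b :: t') =>
          exact ev_e_ne_zero (List.nodup_cons.mp hnd).2
            (by rwa [List.getLast?_cons_cons] at h)

noncomputable def alg (ι : Type) : MvPolynomial ι ℚ →+* FractionRing (MvPolynomial ι ℚ) :=
  algebraMap _ _

lemma alg_injective : Function.Injective (alg ι) := IsFractionRing.injective _ _
lemma alg_ne_zero {p : MvPolynomial ι ℚ} (hp : p ≠ 0) : alg ι p ≠ 0 := by
  rw [Ne, map_eq_zero_iff _ alg_injective]; exact hp
lemma smul_alg (q : ℚ) (x : FractionRing (MvPolynomial ι ℚ)) :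
    q • x = alg ι (C q) * x := by
  rw [algebra_compatible_smul (MvPolynomial ι ℚ) q x, Algebra.smul_def]; rfl

lemma concat_of_getLast? {l : List ι} {i : ι} (h : l.getLast? = some i) :
    l.dropLast ++ [i] = l := by
  have hne : l ≠ [] := by rintro rfl; simp at h
  have hgl : l.getLast hne = i := by
    rw [List.getLast?_eq_getLast (l := l) hne, Option.some_inj] at h; exact h
  rw [← hgl]; exact List.dropLast_append_getLast hne

lemma smul_one_eq_zero {q : ℚ} (h : q • (1 : FractionRing (MvPolynomial ι ℚ)) = 0) :
    q = 0 := by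
  rw [smul_alg, mul_one] at h
  have h2 : C q = (0 : MvPolynomial ι ℚ) := alg_injective (by rw [h, map_zero])
  exact (map_eq_zero_iff C (C_injective ι ℚ)).mp h2

lemma field_helper1 {Kf : Type*} [Field Kf] (q b p : Kf) (hb : b ≠ 0) :
    q * b⁻¹ * (b * p) = q * p := by
  rw [mul_assoc, inv_mul_cancel_left₀ hb]

lemma field_helper2 {Kf : Type*} [Field Kf] (q a d : Kf) (ha : a ≠ 0) :
    q * a * (d * a)⁻¹ = q * d⁻¹ := by
  rw [mul_inv, mul_comm d⁻¹ a⁻¹, ← mul_assoc, mul_assoc q a a⁻¹, mul_inv_cancel₀ ha, mul_one]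

lemma main : ∀ (N : ℕ) (s : Finset (List ι)), (∀ l ∈ s, l.Nodup) →
    (∀ l ∈ s, l.length ≤ N) → ∀ (c : List ι → ℚ),
    (∑ l ∈ s, c l • (alg ι (e l))⁻¹ = 0) → ∀ l ∈ s, c l = 0 := by
  intro N
  induction N with
  | zero =>
    intro s hnd hlen c hrel l hl
    have hle : l = [] := List.eq_nil_of_length_eq_zero (Nat.le_zero.mp (hlen l hl))
    subst hle
    have hs : s = {[]} := by
      apply Finset.eq_singleton_iff_unique_mem.mpr
      exact ⟨hl, fun x hx => List.eq_nil_of_length_eq_zero (Nat.le_zero.mp (hlen x hx))⟩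
    rw [hs, Finset.sum_singleton] at hrel
    have h1 : (alg ι (e ([] : List ι)))⁻¹ = 1 := by
      show (alg ι 1)⁻¹ = 1; rw [map_one, inv_one]
    rw [h1] at hrel
    exact smul_one_eq_zero hrel
  | succ N IH =>
    intro s hnd hlen c hrel l₀ hl₀
    have key : ∀ (i : ι) (m : List ι), m ∈ s → m.getLast? = some i → c m = 0 := by
      intro i m₀ hm₀ hm₀i
      classical
      have hs₁sub : ∀ l ∈ s.filter (fun l => l.getLast? = some i),
          l ∈ s ∧ l.getLast? = some i := fun l hl => Finset.mem_filter.mp hl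
      have hs₂sub : ∀ l ∈ s.filter (fun l => ¬ l.getLast? = some i),
          l ∈ s ∧ ¬ l.getLast? = some i := fun l hl => Finset.mem_filter.mp hl
      set s₁ := s.filter (fun l => l.getLast? = some i)
      set s₂ := s.filter (fun l => ¬ l.getLast? = some i)
      have hsplit : ∑ l ∈ s₁, c l • (alg ι (e l))⁻¹ + ∑ l ∈ s₂, c l • (alg ι (e l))⁻¹ = 0 := by
        rw [Finset.sum_filter_add_sum_filter_not]; exact hrel
      have hD : (∑ l ∈ s₁, c l • (alg ι (e l))⁻¹) * alg ι (X i * ((∏ m ∈ s₂, e m) * ∏ m ∈ s₁, e₀ m))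
          + (∑ l ∈ s₂, c l • (alg ι (e l))⁻¹) * alg ι (X i * ((∏ m ∈ s₂, e m) * ∏ m ∈ s₁, e₀ m))
          = 0 := by
        rw [← add_mul, hsplit, zero_mul]
      rw [Finset.sum_mul, Finset.sum_mul] at hD
      have hterm1 : ∀ l ∈ s₁, (c l • (alg ι (e l))⁻¹) * alg ι (X i * ((∏ m ∈ s₂, e m) * ∏ m ∈ s₁, e₀ m))
          = alg ι (C (c l) * ((∏ m ∈ s₂, e m) * ∏ m ∈ s₁.erase l, e₀ m)) := by
        intro l hl
        obtain ⟨hls, hlast⟩ := hs₁sub l hl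
        have hne : alg ι (e l) ≠ 0 := alg_ne_zero (e_ne_zero (hnd l hls))
        have hDeq : X i * ((∏ m ∈ s₂, e m) * ∏ m ∈ s₁, e₀ m)
            = e l * ((∏ m ∈ s₂, e m) * ∏ m ∈ s₁.erase l, e₀ m) := by
          rw [e_eq_e₀_mul hlast, ← Finset.mul_prod_erase s₁ e₀ hl]
          ring
        rw [smul_alg, hDeq, map_mul (alg ι) (e l), map_mul (alg ι) (C (c l))]
        exact field_helper1 _ _ _ hne
      have hterm2 : ∀ l ∈ s₂, (c l • (alg ι (e l))⁻¹) * alg ι (X i * ((∏ m ∈ s₂, e m) * ∏ m ∈ s₁, e₀ m))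
          = alg ι (C (c l) * (X i * ((∏ m ∈ s₂.erase l, e m) * ∏ m ∈ s₁, e₀ m))) := by
        intro l hl
        obtain ⟨hls, _⟩ := hs₂sub l hl
        have hne : alg ι (e l) ≠ 0 := alg_ne_zero (e_ne_zero (hnd l hls))
        have hDeq : X i * ((∏ m ∈ s₂, e m) * ∏ m ∈ s₁, e₀ m)
            = e l * (X i * ((∏ m ∈ s₂.erase l, e m) * ∏ m ∈ s₁, e₀ m)) := by
          rw [← Finset.mul_prod_erase s₂ e hl]
          ring
        rw [smul_alg, hDeq, map_mul (alg ι) (e l), map_mul (alg ι) (C (c l))]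
        exact field_helper1 _ _ _ hne
      rw [Finset.sum_congr rfl hterm1, Finset.sum_congr rfl hterm2, ← map_sum, ← map_sum,
        ← map_add] at hD
      have hpoly : (∑ l ∈ s₁, C (c l) * ((∏ m ∈ s₂, e m) * ∏ m ∈ s₁.erase l, e₀ m))
          + ∑ l ∈ s₂, C (c l) * (X i * ((∏ m ∈ s₂.erase l, e m) * ∏ m ∈ s₁, e₀ m)) = 0 :=
        alg_injective (by rw [hD, map_zero])
      have hev := congrArg (ev i) hpoly
      rw [map_add, map_sum, map_sum, map_zero] at hev
      have hev2 : ∀ l ∈ s₂, ev i (C (c l) * (X i * ((∏ m ∈ s₂.erase l, e m) * ∏ m ∈ s₁, e₀ m))) = 0 := by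
        intro l hl
        rw [map_mul, map_mul]
        have hXi : ev i (X i) = 0 := by simp [ev]
        rw [hXi, zero_mul, mul_zero]
      have hev1 : ∀ l ∈ s₁, ev i (C (c l) * ((∏ m ∈ s₂, e m) * ∏ m ∈ s₁.erase l, e₀ m))
          = (∏ m ∈ s₂, ev i (e m)) * (C (c l) * ∏ m ∈ s₁.erase l, e m.dropLast) := by
        intro l hl
        rw [map_mul, map_mul, map_prod, map_prod]
        have hC : ev i (C (c l)) = C (c l) := by
          simpa using (ev i).commutes (c l)
        have hprodeq : ∏ m ∈ s₁.erase l, ev i (e₀ m) = ∏ m ∈ s₁.erase l, e m.dropLast := by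
          apply Finset.prod_congr rfl
          intro m hm
          obtain ⟨hms, hmlast⟩ := hs₁sub m (Finset.mem_of_mem_erase hm)
          exact ev_e₀ (hnd m hms) hmlast
        rw [hC, hprodeq]
        ring
      rw [Finset.sum_congr rfl hev1, Finset.sum_congr rfl hev2, ← Finset.mul_sum,
        Finset.sum_const_zero, add_zero] at hev
      have hG : (∏ m ∈ s₂, ev i (e m)) ≠ 0 := by
        apply Finset.prod_ne_zero_iff.mpr
        intro m hm
        obtain ⟨hms, hmlast⟩ := hs₂sub m hm
        exact ev_e_ne_zero (hnd m hms) hmlast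
      have hpoly2 : ∑ l ∈ s₁, C (c l) * ∏ m ∈ s₁.erase l, e m.dropLast = 0 :=
        (mul_eq_zero.mp hev).resolve_left hG
      have hK2 := congrArg (alg ι) hpoly2
      rw [map_sum, map_zero] at hK2
      have hH : ∀ m ∈ s₁, e m.dropLast ≠ 0 := by
        intro m hm
        exact e_ne_zero ((hnd m (hs₁sub m hm).1).sublist (List.dropLast_sublist m))
      have hK3 : ∑ l ∈ s₁, c l • (alg ι (e l.dropLast))⁻¹ = 0 := by
        have hmul := congrArg (fun x => x * (alg ι (∏ m ∈ s₁, e m.dropLast))⁻¹) hK2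
        simp only [zero_mul, Finset.sum_mul] at hmul
        rw [← hmul]
        apply Finset.sum_congr rfl
        intro l hl
        rw [map_mul, smul_alg]
        have hprod : (∏ m ∈ s₁, e m.dropLast) = e l.dropLast * ∏ m ∈ s₁.erase l, e m.dropLast :=
          (Finset.mul_prod_erase s₁ _ hl).symm
        rw [hprod, map_mul]
        have h2 : alg ι (∏ m ∈ s₁.erase l, e m.dropLast) ≠ 0 := by
          apply alg_ne_zero
          apply Finset.prod_ne_zero_iff.mpr
          intro m hm; exact hH m (Finset.mem_of_mem_erase hm)
        exact (field_helper2 _ _ _ h2).symm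
      have hinj : ∀ x ∈ s₁, ∀ y ∈ s₁, x.dropLast = y.dropLast → x = y := by
        intro x hx y hy hxy
        have hxc := concat_of_getLast? (hs₁sub x hx).2
        have hyc := concat_of_getLast? (hs₁sub y hy).2
        rw [← hxc, ← hyc, hxy]
      have himg : ∑ m ∈ s₁.image List.dropLast, c (m ++ [i]) • (alg ι (e m))⁻¹ = 0 := by
        rw [Finset.sum_image hinj, ← hK3]
        apply Finset.sum_congr rfl
        intro l hl
        rw [concat_of_getLast? (hs₁sub l hl).2]
      have hall := IH (s₁.image List.dropLast)
        (by
          intro m hm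
          obtain ⟨l, hl, rfl⟩ := Finset.mem_image.mp hm
          exact (hnd l (hs₁sub l hl).1).sublist (List.dropLast_sublist l))
        (by
          intro m hm
          obtain ⟨l, hl, rfl⟩ := Finset.mem_image.mp hm
          have h1 : l.length ≤ N + 1 := hlen l (hs₁sub l hl).1
          have h2 : l.dropLast.length = l.length - 1 := List.length_dropLast (xs := l)
          omega)
        (fun m => c (m ++ [i])) himg
      have hm₀s₁ : m₀ ∈ s₁ := Finset.mem_filter.mpr ⟨hm₀, hm₀i⟩
      have hfin : c (m₀.dropLast ++ [i]) = 0 := hall m₀.dropLast (Finset.mem_image_of_mem _ hm₀s₁)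
      rwa [concat_of_getLast? hm₀i] at hfin
    match l₀, hl₀ with
    | [], hl₀ =>
      have hz : ∀ b ∈ s, b ≠ ([] : List ι) → c b • (alg ι (e b))⁻¹ = 0 := by
        intro b hb hbne
        match b, hbne with
        | (a :: t), _ =>
          have hgl : (a :: t).getLast? = some ((a :: t).getLast (List.cons_ne_nil a t)) :=
            List.getLast?_eq_getLast _
          rw [key _ _ hb hgl, smul_alg]
          simp
      have hsum := Finset.sum_eq_single_of_mem ([] : List ι) hl₀ hz
      rw [hrel] at hsum
      have h1 : (alg ι (e ([] : List ι)))⁻¹ = 1 := by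
        show (alg ι 1)⁻¹ = 1; rw [map_one, inv_one]
      rw [h1] at hsum
      exact smul_one_eq_zero hsum.symm
    | (a :: t), hl₀ =>
      exact key _ _ hl₀ (List.getLast?_eq_getLast (l := a :: t) (List.cons_ne_nil a t))

lemma filter_succ_le (m : ℕ) (j : Fin m) :
    (Finset.univ.filter (fun t : Fin (m+1) => j.succ ≤ t))
      = (Finset.univ.filter (fun t : Fin m => j ≤ t)).map ⟨Fin.succ, Fin.succ_injective m⟩ := by
  ext a
  simp only [Finset.mem_filter, Finset.mem_map, Finset.mem_univ, true_and,
    Function.Embedding.coeFn_mk]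
  constructor
  · intro ha
    have ha0 : a ≠ 0 := by
      rintro rfl
      simp [Fin.le_def] at ha
    obtain ⟨b, rfl⟩ := Fin.exists_succ_eq.mpr ha0
    exact ⟨b, Fin.succ_le_succ_iff.mp ha, rfl⟩
  · rintro ⟨b, hb, rfl⟩
    exact Fin.succ_le_succ_iff.mpr hb

lemma filter_ne_zero (m : ℕ) :
    (Finset.univ.filter (fun j : Fin (m+1) => (j : ℕ) ≠ 0))
      = Finset.univ.map ⟨Fin.succ, Fin.succ_injective m⟩ := by
  ext a
  simp only [Finset.mem_filter, Finset.mem_map, Finset.mem_univ, true_and,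
    Function.Embedding.coeFn_mk]
  constructor
  · intro ha
    have ha0 : a ≠ 0 := by rintro rfl; exact ha rfl
    obtain ⟨b, rfl⟩ := Fin.exists_succ_eq.mpr ha0
    exact ⟨b, rfl⟩
  · rintro ⟨b, rfl⟩
    simp [Fin.val_succ]

lemma e_ofFn : ∀ (m : ℕ) (f : Fin m → ι),
    e (List.ofFn f) = ∏ j : Fin m, ∑ t ∈ Finset.univ.filter (fun t : Fin m => j ≤ t), X (f t)
  | 0, f => by simp [e]
  | (m+1), f => by
    rw [List.ofFn_succ]
    show esum (f 0 :: List.ofFn fun i => f i.succ) * e (List.ofFn fun i => f i.succ) = _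
    rw [e_ofFn m (fun i => f i.succ), Fin.prod_univ_succ]
    congr 1
    · rw [show esum (f 0 :: List.ofFn fun i => f i.succ) = esum (List.ofFn f) by
        rw [List.ofFn_succ]]
      rw [show (Finset.univ.filter (fun t : Fin (m+1) => (0 : Fin (m+1)) ≤ t)) = Finset.univ by
        apply Finset.filter_true_of_mem; intro t _; exact Fin.zero_le t]
      unfold esum
      rw [List.map_ofFn, List.sum_ofFn]
      rfl
    · apply Finset.prod_congr rfl
      intro j _
      rw [filter_succ_le, Finset.sum_map]
      rfl

lemma tail_ofFn_inj {n : ℕ} : Function.Injective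
    (fun σ : Equiv.Perm (Fin n) => (List.ofFn σ).tail) := by
  match n with
  | 0 => intro σ τ _; exact Subsingleton.elim σ τ
  | (m+1) =>
    intro σ τ h
    simp only [List.ofFn_succ, List.tail_cons] at h
    have hsucc : ∀ b : Fin m, σ b.succ = τ b.succ := by
      intro b
      have := List.ofFn_injective h
      exact congrFun this b
    have h0 : σ 0 = τ 0 := by
      obtain ⟨j, hj⟩ := σ.surjective (τ 0)
      rcases eq_or_ne j 0 with rfl | hj0
      · exact hj
      · obtain ⟨b, rfl⟩ := Fin.exists_succ_eq.mpr hj0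
        rw [hsucc b] at hj
        exact absurd (τ.injective hj) (Fin.succ_ne_zero b)
    ext k
    rcases eq_or_ne k 0 with rfl | hk0
    · exact congrArg Fin.val h0
    · obtain ⟨b, rfl⟩ := Fin.exists_succ_eq.mpr hk0
      exact congrArg Fin.val (hsucc b)

lemma prod_eq_e_tail {n : ℕ} (σ : Equiv.Perm (Fin n)) :
    (∏ j ∈ Finset.univ.filter (fun j : Fin n => (j : ℕ) ≠ 0),
        ∑ t ∈ Finset.univ.filter (fun t : Fin n => j ≤ t), X (σ t) : MvPolynomial (Fin n) ℚ)
      = e (List.ofFn σ).tail := by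
  match n with
  | 0 => simp [e]
  | (m+1) =>
    rw [List.ofFn_succ, List.tail_cons, e_ofFn m (fun i => σ i.succ), filter_ne_zero,
      Finset.prod_map]
    apply Finset.prod_congr rfl
    intro j _
    show (∑ t ∈ Finset.univ.filter (fun t : Fin (m+1) => j.succ ≤ t), X (σ t)) = _
    rw [filter_succ_le, Finset.sum_map]
    rfl

end Stmt10

/-- The rational functions `Q_n(λ_{σ(1)},...,λ_{σ(n)})`, `σ ∈ S_n`, i.e. the inverses
of the polynomials `∏_{j=2}^{n} (λ_{σ(j)} + ... + λ_{σ(n)})` in the fraction field of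
`ℚ[λ_1,...,λ_n]`, are linearly independent over `ℚ`. -/
theorem stmt10 (n : ℕ) :
    LinearIndependent ℚ (fun σ : Equiv.Perm (Fin n) =>
      ((algebraMap (MvPolynomial (Fin n) ℚ) (FractionRing (MvPolynomial (Fin n) ℚ)))
        (∏ j ∈ Finset.univ.filter (fun j : Fin n => (j : ℕ) ≠ 0),
          ∑ t ∈ Finset.univ.filter (fun t : Fin n => j ≤ t), X (σ t)))⁻¹) := by
  classical
  have hfam : (fun σ : Equiv.Perm (Fin n) =>
      ((algebraMap (MvPolynomial (Fin n) ℚ) (FractionRing (MvPolynomial (Fin n) ℚ)))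
        (∏ j ∈ Finset.univ.filter (fun j : Fin n => (j : ℕ) ≠ 0),
          ∑ t ∈ Finset.univ.filter (fun t : Fin n => j ≤ t), X (σ t)))⁻¹)
      = fun σ : Equiv.Perm (Fin n) =>
        (Stmt10.alg (Fin n) (Stmt10.e (List.ofFn σ).tail))⁻¹ := by
    funext σ
    rw [Stmt10.prod_eq_e_tail]
    rfl
  rw [hfam, linearIndependent_iff']
  intro s g hsum σ hσ
  have hinj : Function.Injective (fun σ : Equiv.Perm (Fin n) => (List.ofFn σ).tail) :=
    Stmt10.tail_ofFn_inj
  set tl : Equiv.Perm (Fin n) → List (Fin n) := fun σ => (List.ofFn σ).tail with htl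
  set c : List (Fin n) → ℚ := Function.extend tl g 0 with hc
  have hce : ∀ τ : Equiv.Perm (Fin n), c (tl τ) = g τ := fun τ => hinj.extend_apply g 0 τ
  have hsum2 : ∑ m ∈ s.image tl, c m • (Stmt10.alg (Fin n) (Stmt10.e m))⁻¹ = 0 := by
    rw [Finset.sum_image (fun x _ y _ h => hinj h), ← hsum]
    exact Finset.sum_congr rfl (fun τ _ => by rw [hce])
  have hall := Stmt10.main n (s.image tl)
    (by
      intro m hm
      obtain ⟨τ, hτ, rfl⟩ := Finset.mem_image.mp hm
      exact (List.nodup_ofFn.mpr τ.injective).tail)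
    (by
      intro m hm
      obtain ⟨τ, hτ, rfl⟩ := Finset.mem_image.mp hm
      show (List.ofFn τ).tail.length ≤ n
      rw [List.length_tail, List.length_ofFn]
      omega)
    c hsum2
  have := hall (tl σ) (Finset.mem_image_of_mem _ hσ)
  rwa [hce] at this
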